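/- arXiv:1706.02529 — 2 statements merged into one kernel-verified Lean document; each statement's English description precedes it below -/
import Mathlib

section
/- The algebra G_d satisfies the ascending chain condition on two-sided ideals: every ascending chain of two-sided ideals of G_d stabilizes. Equivalently, every two-sided ideal of G_d is finitely generated as a two-sided ideal. -/
open MvPolynomial

variable (K : Type) [Field K] (ι : Type)

/-- The ideal of the polynomial ring `K[Y,Z]` (variables `y_i = X (inl i)`,
`z_j = X (inr j)`) generated by the products `y_i * z_j`; its underlying `K`-vector
space is spanned by the monomials `Y^α Z^β` with `|α| > 0` and `|β| > 0`. -/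
noncomputable def Vid : Ideal (MvPolynomial (ι ⊕ ι) K) :=
  Ideal.span {p | ∃ i j, p = X (Sum.inl i) * X (Sum.inr j)}

/-- The linear polynomial `∑ a_i y_i`. -/
noncomputable def Yp (a : ι →₀ K) : MvPolynomial (ι ⊕ ι) K :=
  a.sum fun i c => C c * X (Sum.inl i)

/-- The linear polynomial `∑ b_j z_j`. -/
noncomputable def Zp (b : ι →₀ K) : MvPolynomial (ι ⊕ ι) K :=
  b.sum fun j c => C c * X (Sum.inr j)

/-- The model `G` of the free bicommutative algebra with generators `x_i` indexed
by `ι`: its elements are pairs (linear part in the `x_i`'s, element of the span of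
the `v_{α,β} = Y^α Z^β`). -/
abbrev GA : Type := (ι →₀ K) × (Vid K ι)

lemma mul_mem_Vid (a b : ι →₀ K) (p q : MvPolynomial (ι ⊕ ι) K)
    (hp : p ∈ Vid K ι) (hq : q ∈ Vid K ι) :
    (Yp K ι a + p) * (Zp K ι b + q) ∈ Vid K ι := by
  have hYZ : Yp K ι a * Zp K ι b ∈ Vid K ι := by
    rw [Yp, Zp, Finsupp.sum, Finsupp.sum, Finset.sum_mul_sum]
    refine Submodule.sum_mem _ fun i _ => Submodule.sum_mem _ fun j _ => ?_
    have h : (C (a i) * X (Sum.inl i)) * (C (b j) * X (Sum.inr j))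
        = (C (a i) * C (b j)) * (X (Sum.inl i) * X (Sum.inr j) :
          MvPolynomial (ι ⊕ ι) K) := by ring
    rw [h]
    exact Ideal.mul_mem_left _ _ (Ideal.subset_span ⟨i, j, rfl⟩)
  have e : (Yp K ι a + p) * (Zp K ι b + q)
      = Yp K ι a * Zp K ι b + (Yp K ι a * q + (p * Zp K ι b + p * q)) := by ring
  rw [e]
  exact add_mem hYZ (add_mem (Ideal.mul_mem_left _ _ hq)
    (add_mem (Ideal.mul_mem_right _ _ hp) (Ideal.mul_mem_left _ _ hq)))

/-- The multiplication of `G`: `x_i ∘ x_j = y_i z_j`, `x_i ∘ v_{α,β} = v_{α+ε_i,β}`,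
`v_{α,β} ∘ x_j = v_{α,β+ε_j}`, `v_{α,β} ∘ v_{γ,δ} = v_{α+γ,β+δ}`, extended bilinearly. -/
noncomputable instance : Mul (GA K ι) :=
  ⟨fun u v => (0, ⟨(Yp K ι u.1 + (u.2 : MvPolynomial (ι ⊕ ι) K)) *
      (Zp K ι v.1 + (v.2 : MvPolynomial (ι ⊕ ι) K)),
    mul_mem_Vid K ι u.1 v.1 _ _ u.2.2 v.2.2⟩)⟩

/-- The generator `x_i` of `G`. -/
noncomputable def xE (i : ι) : GA K ι := (Finsupp.single i 1, 0)

/-- The basis element `v_{α,β}` of `G²`, as a predicate on elements of `G`. -/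
def IsVElem (w : GA K ι) (α β : ι →₀ ℕ) : Prop :=
  w.1 = 0 ∧ (w.2 : MvPolynomial (ι ⊕ ι) K) = monomial (Finsupp.sumElim α β) 1

/-- The square `G²` of `G`: the linear span of all products. -/
noncomputable def Gsq : Submodule K (GA K ι) := Submodule.span K {w | ∃ u v : GA K ι, w = u * v}

/-- Two-sided ideals of the (nonassociative) algebra `G`: `K`-subspaces absorbing
multiplication on both sides. -/
def IsTwoSidedIdeal (I : Submodule K (GA K ι)) : Prop :=
  ∀ (a : GA K ι), ∀ x ∈ I, a * x ∈ I ∧ x * a ∈ I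

/-- The two-sided ideal of `G` generated by a set: the smallest two-sided ideal
containing it. -/
noncomputable def twoSidedIdealGen (T : Set (GA K ι)) : Submodule K (GA K ι) :=
  sInf {S : Submodule K (GA K ι) | IsTwoSidedIdeal K ι S ∧ T ⊆ ↑S}


/-! ### Auxiliary development -/

section Aux

/-- The element `(0, p)` of `G`. -/
noncomputable def elem0 (p : MvPolynomial (ι ⊕ ι) K) (h : p ∈ Vid K ι) : GA K ι :=
  (0, ⟨p, h⟩)

/-- The set of polynomials `p ∈ Vid` with `(0,p) ∈ I`. -/
def BIset (I : Submodule K (GA K ι)) : Set (MvPolynomial (ι ⊕ ι) K) :=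
  {p | ∃ h : p ∈ Vid K ι, elem0 K ι p h ∈ I}

lemma BIset_mono {I J : Submodule K (GA K ι)} (h : I ≤ J) : BIset K ι I ⊆ BIset K ι J :=
  fun _ hp => ⟨hp.1, h hp.2⟩

lemma elem0_add (p q : MvPolynomial (ι ⊕ ι) K) (hp : p ∈ Vid K ι) (hq : q ∈ Vid K ι) :
    elem0 K ι p hp + elem0 K ι q hq = elem0 K ι (p + q) (add_mem hp hq) := by
  refine Prod.ext (by simp [elem0]) (Subtype.ext rfl)

lemma elem0_smul (c : K) (p : MvPolynomial (ι ⊕ ι) K) (hp : p ∈ Vid K ι) :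
    c • elem0 K ι p hp = elem0 K ι (C c * p) (Ideal.mul_mem_left _ _ hp) := by
  refine Prod.ext (by simp [elem0]) (Subtype.ext ?_)
  show c • p = C c * p
  rw [smul_eq_C_mul]

lemma Yp_single (i : ι) : Yp K ι (Finsupp.single i 1) = X (Sum.inl i) := by
  rw [Yp, Finsupp.sum_single_index] <;> simp

lemma Zp_single (j : ι) : Zp K ι (Finsupp.single j 1) = X (Sum.inr j) := by
  rw [Zp, Finsupp.sum_single_index] <;> simp

lemma Yp_zero : Yp K ι 0 = 0 := Finsupp.sum_zero_index
lemma Zp_zero : Zp K ι 0 = 0 := Finsupp.sum_zero_index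

lemma xE_mul_elem0 (i : ι) (p : MvPolynomial (ι ⊕ ι) K) (hp : p ∈ Vid K ι) :
    xE K ι i * elem0 K ι p hp
      = elem0 K ι (X (Sum.inl i) * p) (Ideal.mul_mem_left _ _ hp) := by
  refine Prod.ext rfl (Subtype.ext ?_)
  show (Yp K ι (Finsupp.single i 1) + ((0 : Vid K ι) : MvPolynomial (ι ⊕ ι) K)) *
      (Zp K ι 0 + p) = X (Sum.inl i) * p
  rw [Yp_single, Zp_zero]
  simp

lemma elem0_mul_xE (j : ι) (p : MvPolynomial (ι ⊕ ι) K) (hp : p ∈ Vid K ι) :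
    elem0 K ι p hp * xE K ι j
      = elem0 K ι (X (Sum.inr j) * p) (Ideal.mul_mem_left _ _ hp) := by
  refine Prod.ext rfl (Subtype.ext ?_)
  show (Yp K ι 0 + p) * (Zp K ι (Finsupp.single j 1) +
      ((0 : Vid K ι) : MvPolynomial (ι ⊕ ι) K)) = X (Sum.inr j) * p
  rw [Yp_zero, Zp_single]
  simp [mul_comm]

/-- If `I` is a two-sided ideal, `BIset I` is an ideal of the polynomial ring. -/
noncomputable def BId (I : Submodule K (GA K ι)) (hI : IsTwoSidedIdeal K ι I) :
    Ideal (MvPolynomial (ι ⊕ ι) K) where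
  carrier := BIset K ι I
  zero_mem' := ⟨zero_mem _, by
    have h0 : elem0 K ι 0 (zero_mem _) = 0 := Prod.ext rfl (Subtype.ext rfl)
    rw [h0]; exact zero_mem I⟩
  add_mem' := by
    rintro p q ⟨hp, hip⟩ ⟨hq, hiq⟩
    exact ⟨add_mem hp hq, by rw [← elem0_add K ι p q hp hq]; exact add_mem hip hiq⟩
  smul_mem' := by
    intro r p hp
    rw [smul_eq_mul]
    induction r using MvPolynomial.induction_on with
    | C c =>
        obtain ⟨hv, hi⟩ := hp
        exact ⟨Ideal.mul_mem_left _ _ hv, by rw [← elem0_smul K ι c p hv]; exact Submodule.smul_mem I c hi⟩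
    | add f g hf hg =>
        obtain ⟨hfv, hfi⟩ := hf
        obtain ⟨hgv, hgi⟩ := hg
        rw [add_mul]
        exact ⟨add_mem hfv hgv, by rw [← elem0_add K ι _ _ hfv hgv]; exact add_mem hfi hgi⟩
    | mul_X f v hf =>
        obtain ⟨hfv, hfi⟩ := hf
        have e : f * X v * p = X v * (f * p) := by ring
        rw [e]
        cases v with
        | inl i =>
            refine ⟨Ideal.mul_mem_left _ _ hfv, ?_⟩
            rw [← xE_mul_elem0 K ι i _ hfv]
            exact (hI (xE K ι i) _ hfi).1
        | inr j =>
            refine ⟨Ideal.mul_mem_left _ _ hfv, ?_⟩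
            rw [← elem0_mul_xE K ι j _ hfv]
            exact (hI (xE K ι j) _ hfi).2

lemma BId_coe (I : Submodule K (GA K ι)) (hI : IsTwoSidedIdeal K ι I) :
    (BId K ι I hI : Set (MvPolynomial (ι ⊕ ι) K)) = BIset K ι I := rfl

/-- Key lemma: a submodule of `G` is determined by its first projection and its
trace on `{0} × Vid`. -/
lemma key_eq (I J : Submodule K (GA K ι)) (hIJ : I ≤ J)
    (hA : I.map (LinearMap.fst K (ι →₀ K) (Vid K ι))
        = J.map (LinearMap.fst K (ι →₀ K) (Vid K ι)))
    (hB : BIset K ι I = BIset K ι J) : I = J := by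
  refine le_antisymm hIJ fun x hx => ?_
  have hx1 : x.1 ∈ J.map (LinearMap.fst K (ι →₀ K) (Vid K ι)) := ⟨x, hx, rfl⟩
  rw [← hA] at hx1
  obtain ⟨y, hy, hy1⟩ := hx1
  have hxy : x - y ∈ J := sub_mem hx (hIJ hy)
  have hy1' : y.1 = x.1 := hy1
  have h1 : (x - y).1 = 0 := by
    show x.1 - y.1 = 0
    rw [hy1', sub_self]
  have hmem : ((x - y).2 : MvPolynomial (ι ⊕ ι) K) ∈ BIset K ι J := by
    refine ⟨(x - y).2.2, ?_⟩
    have he : elem0 K ι _ (x - y).2.2 = x - y := Prod.ext h1.symm (Subtype.ext rfl)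
    rw [he]; exact hxy
  rw [← hB] at hmem
  obtain ⟨hv, hi⟩ := hmem
  have he : elem0 K ι _ hv = x - y := Prod.ext h1.symm (Subtype.ext rfl)
  rw [he] at hi
  have hfin := add_mem hi hy
  rwa [sub_add_cancel] at hfin

lemma twoSidedIdealGen_isTwoSided (T : Set (GA K ι)) :
    IsTwoSidedIdeal K ι (twoSidedIdealGen K ι T) := by
  intro a x hx
  rw [twoSidedIdealGen, Submodule.mem_sInf] at hx
  constructor <;>
  · rw [twoSidedIdealGen, Submodule.mem_sInf]
    intro S hS
    first
      | exact (hS.1 a x (hx S hS)).1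
      | exact (hS.1 a x (hx S hS)).2

lemma subset_twoSidedIdealGen (T : Set (GA K ι)) : T ⊆ ↑(twoSidedIdealGen K ι T) := by
  intro x hx
  rw [SetLike.mem_coe, twoSidedIdealGen, Submodule.mem_sInf]
  exact fun S hS => hS.2 hx

lemma twoSidedIdealGen_le {T : Set (GA K ι)} {I : Submodule K (GA K ι)}
    (hI : IsTwoSidedIdeal K ι I) (hT : T ⊆ ↑I) : twoSidedIdealGen K ι T ≤ I :=
  sInf_le ⟨hI, hT⟩

end Aux

/-- The algebra `G_d` satisfies the ascending chain condition on two-sided ideals: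
every ascending chain of two-sided ideals stabilizes.  Equivalently, every
two-sided ideal of `G_d` is finitely generated as a two-sided ideal. -/
theorem Gd_acc_two_sided_ideals (d : ℕ) :
    (∀ I : ℕ → Submodule K (GA K (Fin d)),
      (∀ n, IsTwoSidedIdeal K (Fin d) (I n)) → Monotone I →
      ∃ N, ∀ n, N ≤ n → I n = I N) ∧
    (∀ I : Submodule K (GA K (Fin d)), IsTwoSidedIdeal K (Fin d) I →
      ∃ T : Finset (GA K (Fin d)), I = twoSidedIdealGen K (Fin d) ↑T) := by
  classical
  have hNoethPoly : IsNoetherian (MvPolynomial (Fin d ⊕ Fin d) K)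
      (MvPolynomial (Fin d ⊕ Fin d) K) := isNoetherianRing_iff.mp inferInstance
  have hNoethFin : IsNoetherian K (Fin d →₀ K) := inferInstance
  constructor
  · -- ACC
    intro I hI hmono
    obtain ⟨N₁, hN₁⟩ := monotone_stabilizes_iff_noetherian.mpr hNoethFin
      ⟨fun n => (I n).map (LinearMap.fst K (Fin d →₀ K) (Vid K (Fin d))),
        fun a b hab => Submodule.map_mono (hmono hab)⟩
    obtain ⟨N₂, hN₂⟩ := monotone_stabilizes_iff_noetherian.mpr hNoethPoly
      ⟨fun n => BId K (Fin d) (I n) (hI n),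
        fun a b hab p hp => BIset_mono K (Fin d) (hmono hab) hp⟩
    refine ⟨max N₁ N₂, fun n hn => ?_⟩
    have hA : (I (max N₁ N₂)).map (LinearMap.fst K (Fin d →₀ K) (Vid K (Fin d)))
        = (I n).map (LinearMap.fst K (Fin d →₀ K) (Vid K (Fin d))) :=
      (hN₁ (max N₁ N₂) (le_max_left _ _)).symm.trans
        (hN₁ n (le_trans (le_max_left _ _) hn))
    have hBid : BId K (Fin d) (I (max N₁ N₂)) (hI _) = BId K (Fin d) (I n) (hI n) :=
      (hN₂ (max N₁ N₂) (le_max_right _ _)).symm.trans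
        (hN₂ n (le_trans (le_max_right _ _) hn))
    have hB : BIset K (Fin d) (I (max N₁ N₂)) = BIset K (Fin d) (I n) := by
      rw [← BId_coe K (Fin d) _ (hI (max N₁ N₂)), ← BId_coe K (Fin d) _ (hI n), hBid]
    exact (key_eq K (Fin d) _ _ (hmono hn) hA hB).symm
  · -- finite generation
    intro I hI
    obtain ⟨S, hS⟩ := (isNoetherian_def.mp hNoethPoly) (BId K (Fin d) I hI)
    obtain ⟨S', hS'⟩ := (isNoetherian_def.mp hNoethFin)
      (I.map (LinearMap.fst K (Fin d →₀ K) (Vid K (Fin d))))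
    have hSmem : ∀ p ∈ S, p ∈ BIset K (Fin d) I := fun p hp => by
      have h1 : p ∈ BId K (Fin d) I hI := hS ▸ Submodule.subset_span hp
      exact h1
    have hS'mem : ∀ a ∈ S', ∃ x, x ∈ I ∧ x.1 = a := fun a ha => by
      have h1 : a ∈ I.map (LinearMap.fst K (Fin d →₀ K) (Vid K (Fin d))) :=
        hS' ▸ Submodule.subset_span ha
      obtain ⟨x, hx, hxa⟩ := h1
      exact ⟨x, hx, hxa⟩
    let f : {p // p ∈ S} → GA K (Fin d) :=
      fun p => elem0 K (Fin d) p.1 (hSmem p.1 p.2).choose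
    have hf : ∀ p : {p // p ∈ S}, f p ∈ I := fun p => (hSmem p.1 p.2).choose_spec
    let g : {a // a ∈ S'} → GA K (Fin d) := fun a => (hS'mem a.1 a.2).choose
    have hg : ∀ a : {a // a ∈ S'}, g a ∈ I ∧ (g a).1 = a.1 :=
      fun a => (hS'mem a.1 a.2).choose_spec
    refine ⟨Finset.image f Finset.univ ∪ Finset.image g Finset.univ, ?_⟩
    set T : Finset (GA K (Fin d)) :=
      Finset.image f Finset.univ ∪ Finset.image g Finset.univ with hT
    set J := twoSidedIdealGen K (Fin d) (↑T : Set (GA K (Fin d))) with hJdef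
    have hTI : (↑T : Set (GA K (Fin d))) ⊆ ↑I := by
      intro x hx
      rw [Finset.coe_union, Set.mem_union] at hx
      rcases hx with hx | hx <;> rw [Finset.coe_image, Set.mem_image] at hx <;>
        obtain ⟨p, _, rfl⟩ := hx
      · exact hf p
      · exact (hg p).1
    have hJI : J ≤ I := twoSidedIdealGen_le K (Fin d) hI hTI
    have hTJ : (↑T : Set (GA K (Fin d))) ⊆ ↑J := subset_twoSidedIdealGen K (Fin d) _
    have hJ2 : IsTwoSidedIdeal K (Fin d) J := twoSidedIdealGen_isTwoSided K (Fin d) _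
    have hmemT : ∀ x : GA K (Fin d), (∃ p, f p = x) ∨ (∃ a, g a = x) → x ∈ T := by
      intro x hx
      rw [hT, Finset.mem_union]
      rcases hx with ⟨p, hp⟩ | ⟨a, ha⟩
      · exact Or.inl (Finset.mem_image.mpr ⟨p, Finset.mem_univ _, hp⟩)
      · exact Or.inr (Finset.mem_image.mpr ⟨a, Finset.mem_univ _, ha⟩)
    have hA : J.map (LinearMap.fst K (Fin d →₀ K) (Vid K (Fin d)))
        = I.map (LinearMap.fst K (Fin d →₀ K) (Vid K (Fin d))) := by
      refine le_antisymm (Submodule.map_mono hJI) ?_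
      rw [← hS', Submodule.span_le]
      intro a ha
      exact ⟨g ⟨a, ha⟩, hTJ (hmemT _ (Or.inr ⟨⟨a, ha⟩, rfl⟩)), (hg ⟨a, ha⟩).2⟩
    have hB : BIset K (Fin d) J = BIset K (Fin d) I := by
      refine Set.Subset.antisymm (BIset_mono K (Fin d) hJI) ?_
      have hle : BId K (Fin d) I hI ≤ BId K (Fin d) J hJ2 := by
        rw [← hS, Submodule.span_le]
        intro p hp
        refine ⟨(hSmem p hp).choose, hTJ (hmemT _ (Or.inl ⟨⟨p, hp⟩, rfl⟩))⟩
      exact fun p hp => hle hp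
    exact (key_eq K (Fin d) J I hJI hA hB).symm
end

section
/- Let f and g be elements of the square F² of the free bicommutative algebra F of countable rank, with images f₁, g₁ in G². If wt(f₁) ≼ wt(g₁) in the divisibility-with-embedding order, then there exists an element h in the T-ideal of F generated by f whose image h₁ in G² satisfies wt(h₁) = wt(g₁). -/
open MvPolynomial

variable (K : Type) [Field K] (ι : Type)

/-- Exponent vectors of monomials of `K[y_1, y_2, …, z_1, z_2, …]`. -/
abbrev Mon : Type := (ℕ ⊕ ℕ) →₀ ℕ

/-- The reflected lexicographic order on monomials: first compare the `y`-exponents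
from the largest index downwards, then the `z`-exponents. -/
def MonLT (u v : Mon) : Prop :=
  (∃ i, u (Sum.inl i) < v (Sum.inl i) ∧ ∀ j, i < j → u (Sum.inl j) = v (Sum.inl j)) ∨
  ((∀ i, u (Sum.inl i) = v (Sum.inl i)) ∧
    ∃ i, u (Sum.inr i) < v (Sum.inr i) ∧ ∀ j, i < j → u (Sum.inr j) = v (Sum.inr j))

def MonLE (u v : Mon) : Prop := MonLT u v ∨ u = v

/-- `μ ≼ ν` iff some strictly increasing renaming `y_i ↦ y_{φ(i)}, z_i ↦ z_{φ(i)}`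
of the monomial `μ` divides the monomial `ν`. -/
def MonPrec (μ ν : Mon) : Prop :=
  ∃ φ : ℕ → ℕ, StrictMono φ ∧ Finsupp.mapDomain (Sum.map φ φ) μ ≤ ν

/-- `μ` is the weight of `f`: the `≤`-greatest monomial of `f` with nonzero
coefficient in the reflected lexicographic order. -/
def IsWt (f : MvPolynomial (ℕ ⊕ ℕ) K) (μ : Mon) : Prop :=
  MvPolynomial.coeff μ f ≠ 0 ∧ ∀ ν : Mon, MvPolynomial.coeff ν f ≠ 0 → MonLE ν μ

/-- The T-ideal of the free bicommutative algebra `F ≅ G` of countable rank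
generated by a set: the smallest two-sided ideal containing it which is invariant
under all (`K`-linear, multiplicative) endomorphisms of the algebra. -/
noncomputable def TIdealGen (T : Set (GA K ℕ)) : Submodule K (GA K ℕ) :=
  sInf {I : Submodule K (GA K ℕ) | IsTwoSidedIdeal K ℕ I ∧ T ⊆ ↑I ∧
    ∀ e : GA K ℕ →ₗ[K] GA K ℕ, (∀ a b : GA K ℕ, e (a * b) = e a * e b) →
      ∀ x ∈ I, e x ∈ I}

/-! ### Auxiliary lemmas -/

section Aux

variable {K}

lemma rename_mem_Vid (φ : ℕ → ℕ) (p : MvPolynomial (ℕ ⊕ ℕ) K) (hp : p ∈ Vid K ℕ) :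
    rename (Sum.map φ φ) p ∈ Vid K ℕ := by
  have hmap : Ideal.map (rename (Sum.map φ φ) :
      MvPolynomial (ℕ ⊕ ℕ) K →ₐ[K] MvPolynomial (ℕ ⊕ ℕ) K).toRingHom (Vid K ℕ) ≤ Vid K ℕ := by
    rw [Vid, Ideal.map_span, Ideal.span_le]
    rintro q ⟨r, ⟨i, j, rfl⟩, rfl⟩
    exact Ideal.subset_span ⟨φ i, φ j, by simp⟩
  exact hmap (Ideal.mem_map_of_mem _ hp)

/-- The restriction of `rename` to `Vid`. -/
noncomputable def rVaux (φ : ℕ → ℕ) : Vid K ℕ →ₗ[K] MvPolynomial (ℕ ⊕ ℕ) K :=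
  LinearMap.comp
    (AlgHom.toLinearMap (rename (Sum.map φ φ) : MvPolynomial (ℕ ⊕ ℕ) K →ₐ[K] MvPolynomial (ℕ ⊕ ℕ) K))
    (((Vid K ℕ).restrictScalars K).subtype)

lemma rVaux_apply (φ : ℕ → ℕ) (p : Vid K ℕ) :
    rVaux (K := K) φ p = rename (Sum.map φ φ) (p : MvPolynomial (ℕ ⊕ ℕ) K) := rfl

noncomputable def rV (φ : ℕ → ℕ) : Vid K ℕ →ₗ[K] Vid K ℕ :=
  LinearMap.codRestrict ((Vid K ℕ).restrictScalars K) (rVaux φ)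
    (fun x => by rw [rVaux_apply]; exact rename_mem_Vid φ _ x.2)

lemma rV_coe (φ : ℕ → ℕ) (p : Vid K ℕ) :
    (rV (K := K) φ p : MvPolynomial (ℕ ⊕ ℕ) K) = rename (Sum.map φ φ) (p : _) := rfl

/-- The renaming endomorphism of `G` induced by `φ : ℕ → ℕ`. -/
noncomputable def eL (φ : ℕ → ℕ) : GA K ℕ →ₗ[K] GA K ℕ :=
  (Finsupp.lmapDomain K K φ ∘ₗ LinearMap.fst K _ _).prod (rV φ ∘ₗ LinearMap.snd K _ _)

lemma eL_fst (φ : ℕ → ℕ) (u : GA K ℕ) : (eL (K := K) φ u).1 = Finsupp.mapDomain φ u.1 := by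
  simp [eL, Finsupp.lmapDomain]

lemma eL_snd (φ : ℕ → ℕ) (u : GA K ℕ) :
    ((eL (K := K) φ u).2 : MvPolynomial (ℕ ⊕ ℕ) K) = rename (Sum.map φ φ) (u.2 : _) := by
  simp [eL, rV_coe]

lemma mul_fst (u v : GA K ℕ) : (u * v).1 = 0 := rfl

lemma mul_snd (u v : GA K ℕ) : ((u * v).2 : MvPolynomial (ℕ ⊕ ℕ) K) =
    (Yp K ℕ u.1 + (u.2 : MvPolynomial (ℕ ⊕ ℕ) K)) *
      (Zp K ℕ v.1 + (v.2 : MvPolynomial (ℕ ⊕ ℕ) K)) := rfl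

lemma rename_Yp (φ : ℕ → ℕ) (a : ℕ →₀ K) :
    rename (Sum.map φ φ) (Yp K ℕ a) = Yp K ℕ (Finsupp.mapDomain φ a) := by
  rw [Yp, Yp, map_finsuppSum,
    Finsupp.sum_mapDomain_index (by simp) (fun b c₁ c₂ => by rw [map_add, add_mul])]
  simp [rename_X]

lemma rename_Zp (φ : ℕ → ℕ) (a : ℕ →₀ K) :
    rename (Sum.map φ φ) (Zp K ℕ a) = Zp K ℕ (Finsupp.mapDomain φ a) := by
  rw [Zp, Zp, map_finsuppSum,
    Finsupp.sum_mapDomain_index (by simp) (fun b c₁ c₂ => by rw [map_add, add_mul])]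
  simp [rename_X]

lemma eL_mul (φ : ℕ → ℕ) (u v : GA K ℕ) :
    eL (K := K) φ (u * v) = eL (K := K) φ u * eL (K := K) φ v := by
  refine Prod.ext ?_ (Subtype.ext ?_)
  · rw [eL_fst, mul_fst, mul_fst, Finsupp.mapDomain_zero]
  · rw [eL_snd, mul_snd, mul_snd, map_mul, map_add, map_add, rename_Yp, rename_Zp,
      eL_fst, eL_fst, eL_snd, eL_snd]

lemma eLf_mem (f : GA K ℕ) (φ : ℕ → ℕ) : eL (K := K) φ f ∈ TIdealGen K {f} := by
  rw [TIdealGen, Submodule.mem_sInf]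
  intro I hI
  exact hI.2.2 (eL φ) (eL_mul φ) f (hI.2.1 rfl)

lemma fst_eq_zero_of_mem_Gsq (f : GA K ℕ) (hf : f ∈ Gsq K ℕ) : f.1 = 0 := by
  have hle : Gsq K ℕ ≤ LinearMap.ker (LinearMap.fst K (ℕ →₀ K) (Vid K ℕ)) := by
    rw [Gsq, Submodule.span_le]
    rintro w ⟨u, v, rfl⟩
    simp only [SetLike.mem_coe, LinearMap.mem_ker, LinearMap.fst_apply]
    exact mul_fst u v
  exact hle hf

lemma step_mem (f : GA K ℕ) (a : ℕ ⊕ ℕ) (w : GA K ℕ) (hw : w ∈ TIdealGen K {f})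
    (hw1 : w.1 = 0) :
    ∃ h ∈ TIdealGen K {f}, h.1 = 0 ∧
      (h.2 : MvPolynomial (ℕ ⊕ ℕ) K) = X a * (w.2 : MvPolynomial (ℕ ⊕ ℕ) K) := by
  cases a with
  | inl i =>
    refine ⟨xE K ℕ i * w, ?_, mul_fst _ _, ?_⟩
    · rw [TIdealGen, Submodule.mem_sInf] at hw ⊢
      intro I hI; exact (hI.1 _ _ (hw I hI)).1
    · rw [mul_snd, hw1]
      simp [xE, Yp, Zp, Finsupp.sum_single_index]
  | inr j =>
    refine ⟨w * xE K ℕ j, ?_, mul_fst _ _, ?_⟩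
    · rw [TIdealGen, Submodule.mem_sInf] at hw ⊢
      intro I hI; exact (hI.1 _ _ (hw I hI)).2
    · rw [mul_snd, hw1]
      simp [xE, Yp, Zp, Finsupp.sum_single_index, mul_comm]

lemma mon_mul_mem (f : GA K ℕ) (m : Mon) :
    ∀ w ∈ TIdealGen K {f}, w.1 = 0 →
    ∃ h ∈ TIdealGen K {f}, h.1 = 0 ∧
      (h.2 : MvPolynomial (ℕ ⊕ ℕ) K) = monomial m 1 * (w.2 : MvPolynomial (ℕ ⊕ ℕ) K) := by
  induction m using Finsupp.induction with
  | zero => exact fun w hw h1 => ⟨w, hw, h1, by simp⟩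
  | single_add a n m _ _ ih =>
    intro w hw h1
    obtain ⟨h, hh, hh1, hh2⟩ := ih w hw h1
    have key : ∀ k : ℕ, ∃ h' ∈ TIdealGen K {f}, h'.1 = 0 ∧
        (h'.2 : MvPolynomial (ℕ ⊕ ℕ) K) = X a ^ k * (h.2 : MvPolynomial (ℕ ⊕ ℕ) K) := by
      intro k
      induction k with
      | zero => exact ⟨h, hh, hh1, by simp⟩
      | succ k ihk =>
        obtain ⟨h', hh', h1', h2'⟩ := ihk
        obtain ⟨h'', hh'', h1'', h2''⟩ := step_mem f a h' hh' h1'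
        exact ⟨h'', hh'', h1'', by rw [h2'', h2', pow_succ]; ring⟩
    obtain ⟨h', hh', h1', h2'⟩ := key n
    refine ⟨h', hh', h1', ?_⟩
    rw [h2', hh2, ← mul_assoc, X_pow_eq_monomial, monomial_mul, one_mul]

lemma mapD_apply {φ : ℕ → ℕ} (hφ : Function.Injective φ) (u : Mon) (x : ℕ ⊕ ℕ) :
    Finsupp.mapDomain (Sum.map φ φ) u (Sum.map φ φ x) = u x :=
  Finsupp.mapDomain_apply (Sum.map_injective.2 ⟨hφ, hφ⟩) u x

lemma mapD_inl_zero {φ : ℕ → ℕ} (u : Mon) {j : ℕ} (hj : j ∉ Set.range φ) :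
    Finsupp.mapDomain (Sum.map φ φ) u (Sum.inl j) = 0 := by
  refine Finsupp.mapDomain_notin_range _ _ ?_
  rintro ⟨x, hx⟩
  cases x with
  | inl i => exact hj ⟨i, Sum.inl_injective hx⟩
  | inr i => exact Sum.inl_ne_inr hx.symm

lemma mapD_inr_zero {φ : ℕ → ℕ} (u : Mon) {j : ℕ} (hj : j ∉ Set.range φ) :
    Finsupp.mapDomain (Sum.map φ φ) u (Sum.inr j) = 0 := by
  refine Finsupp.mapDomain_notin_range _ _ ?_
  rintro ⟨x, hx⟩
  cases x with
  | inl i => exact Sum.inl_ne_inr hx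
  | inr i => exact hj ⟨i, Sum.inr_injective hx⟩

lemma monLT_map {φ : ℕ → ℕ} (hφ : StrictMono φ) {u v : Mon} (h : MonLT u v) :
    MonLT (Finsupp.mapDomain (Sum.map φ φ) u) (Finsupp.mapDomain (Sum.map φ φ) v) := by
  have hinj := hφ.injective
  rcases h with ⟨i, hlt, heq⟩ | ⟨hall, i, hlt, heq⟩
  · left
    refine ⟨φ i, ?_, ?_⟩
    · rw [show (Sum.inl (φ i) : ℕ ⊕ ℕ) = Sum.map φ φ (Sum.inl i) from rfl,
        mapD_apply hinj, mapD_apply hinj]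
      exact hlt
    · intro j hj
      by_cases hr : j ∈ Set.range φ
      · obtain ⟨k, rfl⟩ := hr
        rw [show (Sum.inl (φ k) : ℕ ⊕ ℕ) = Sum.map φ φ (Sum.inl k) from rfl,
          mapD_apply hinj, mapD_apply hinj]
        exact heq k (hφ.lt_iff_lt.1 hj)
      · rw [mapD_inl_zero u hr, mapD_inl_zero v hr]
  · right
    constructor
    · intro j
      by_cases hr : j ∈ Set.range φ
      · obtain ⟨k, rfl⟩ := hr
        rw [show (Sum.inl (φ k) : ℕ ⊕ ℕ) = Sum.map φ φ (Sum.inl k) from rfl,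
          mapD_apply hinj, mapD_apply hinj]
        exact hall k
      · rw [mapD_inl_zero u hr, mapD_inl_zero v hr]
    · refine ⟨φ i, ?_, ?_⟩
      · rw [show (Sum.inr (φ i) : ℕ ⊕ ℕ) = Sum.map φ φ (Sum.inr i) from rfl,
          mapD_apply hinj, mapD_apply hinj]
        exact hlt
      · intro j hj
        by_cases hr : j ∈ Set.range φ
        · obtain ⟨k, rfl⟩ := hr
          rw [show (Sum.inr (φ k) : ℕ ⊕ ℕ) = Sum.map φ φ (Sum.inr k) from rfl,
            mapD_apply hinj, mapD_apply hinj]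
          exact heq k (hφ.lt_iff_lt.1 hj)
        · rw [mapD_inr_zero u hr, mapD_inr_zero v hr]

lemma monLE_map {φ : ℕ → ℕ} (hφ : StrictMono φ) {u v : Mon} (h : MonLE u v) :
    MonLE (Finsupp.mapDomain (Sum.map φ φ) u) (Finsupp.mapDomain (Sum.map φ φ) v) := by
  rcases h with h | rfl
  · exact Or.inl (monLT_map hφ h)
  · exact Or.inr rfl

lemma monLE_add (d : Mon) {u v : Mon} (h : MonLE u v) : MonLE (d + u) (d + v) := by
  rcases h with h | rfl
  · left
    rcases h with ⟨i, hlt, heq⟩ | ⟨hall, i, hlt, heq⟩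
    · exact Or.inl ⟨i, by simp only [Finsupp.add_apply]; exact Nat.add_lt_add_left hlt _,
        fun j hj => by simp only [Finsupp.add_apply, heq j hj]⟩
    · exact Or.inr ⟨fun j => by simp only [Finsupp.add_apply, hall j],
        ⟨i, by simp only [Finsupp.add_apply]; exact Nat.add_lt_add_left hlt _,
          fun j hj => by simp only [Finsupp.add_apply, heq j hj]⟩⟩
  · exact Or.inr rfl

end Aux

/-- The key lemma: if `f, g` lie in the square `F²` of the free bicommutative
algebra of countable rank and the weight of (the image of) `f` precedes the weight
of `g` in the order `≼`, then the T-ideal generated by `f` contains an element `h`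
whose image has the same weight as that of `g`. -/
theorem key_lemma_weights (f g : GA K ℕ) (hf : f ∈ Gsq K ℕ) (hg : g ∈ Gsq K ℕ)
    (μ ν : Mon)
    (hμ : IsWt K ((f.2 : MvPolynomial (ℕ ⊕ ℕ) K)) μ)
    (hν : IsWt K ((g.2 : MvPolynomial (ℕ ⊕ ℕ) K)) ν)
    (hprec : MonPrec μ ν) :
    ∃ h ∈ TIdealGen K {f}, IsWt K ((h.2 : MvPolynomial (ℕ ⊕ ℕ) K)) ν := by
  obtain ⟨φ, hφ, hle⟩ := hprec
  set μ' : Mon := Finsupp.mapDomain (Sum.map φ φ) μ with hμ'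
  set d : Mon := ν - μ' with hd
  have hdμ : d + μ' = ν := tsub_add_cancel_of_le hle
  have hf1 : (eL (K := K) φ f).1 = 0 := by
    rw [eL_fst, fst_eq_zero_of_mem_Gsq f hf, Finsupp.mapDomain_zero]
  obtain ⟨h, hmem, h1, h2⟩ :=
    mon_mul_mem f d (eL (K := K) φ f) (eLf_mem f φ) hf1
  rw [eL_snd] at h2
  refine ⟨h, hmem, ?_, ?_⟩
  · rw [h2, ← hdμ, coeff_monomial_mul, one_mul,
      coeff_rename_mapDomain _ (Sum.map_injective.2 ⟨hφ.injective, hφ.injective⟩)]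
    exact hμ.1
  · intro κ hκ
    rw [h2, coeff_monomial_mul'] at hκ
    by_cases hdκ : d ≤ κ
    · rw [if_pos hdκ, one_mul] at hκ
      obtain ⟨ρ, hρ, hρne⟩ := coeff_rename_ne_zero _ _ _ hκ
      have h3 : MonLE (Finsupp.mapDomain (Sum.map φ φ) ρ) μ' := monLE_map hφ (hμ.2 ρ hρne)
      rw [hρ] at h3
      have h4 := monLE_add d h3
      rwa [hdμ, add_tsub_cancel_of_le hdκ] at h4
    · rw [if_neg hdκ] at hκ
      exact absurd rfl hκ
end
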